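/- Let m ≥ 1 and let A be the m×m WSGD Toeplitz matrix built from the weights w_k for (p,q)=(1,0) of order α. If α = 1, then every complex eigenvalue λ of A satisfies Re(λ) = 0. If 1 < α ≤ 2, then every complex eigenvalue λ of A satisfies Re(λ) < 0, and A is negative definite, i.e., xᵀ A x < 0 for every nonzero x ∈ ℝ^m. -/

import Mathlib

open Matrix

/-- Grünwald coefficients `g_k = (-1)^k * binom(α, k)`. -/
noncomputable def gru (α : ℝ) (k : ℕ) : ℝ :=
  (-1 : ℝ) ^ k * (∏ i ∈ Finset.range k, (α - (i : ℝ))) / (Nat.factorial k : ℝ)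

/-- WSGD weights for `(p,q) = (1,0)`. -/
noncomputable def w10 (α : ℝ) : ℕ → ℝ
  | 0 => α / 2 * gru α 0
  | k + 1 => α / 2 * gru α (k + 1) + (2 - α) / 2 * gru α k

/-- WSGD weights for `(p,q) = (1,-1)`. -/
noncomputable def w1m1 (α : ℝ) : ℕ → ℝ
  | 0 => (2 + α) / 4 * gru α 0
  | 1 => (2 + α) / 4 * gru α 1
  | k + 2 => (2 + α) / 4 * gru α (k + 2) + (2 - α) / 4 * gru α k

/-- The m×m WSGD Toeplitz matrix: `A i j = w (i - j + 1)` when `i - j + 1 ≥ 0`, else `0`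
(0-based indices give the same entries as the 1-based description). -/
noncomputable def wsgdMatrix (w : ℕ → ℝ) (m : ℕ) : Matrix (Fin m) (Fin m) ℝ :=
  Matrix.of fun i j => if (j : ℕ) ≤ (i : ℕ) + 1 then w ((i : ℕ) + 1 - (j : ℕ)) else 0


lemma gru_zero (α : ℝ) : gru α 0 = 1 := by simp [gru]

lemma gru_one (α : ℝ) : gru α 1 = -α := by simp [gru]

lemma gru_two (α : ℝ) : gru α 2 = α * (α - 1) / 2 := by
  norm_num [gru, Finset.prod_range_succ, Nat.factorial]

lemma gru_succ (α : ℝ) (k : ℕ) :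
    gru α (k + 1) = gru α k * ((k : ℝ) - α) / (k + 1) := by
  have hk : ((Nat.factorial k : ℝ)) ≠ 0 := by positivity
  have hk1 : ((k : ℝ) + 1) ≠ 0 := by positivity
  simp only [gru, Finset.prod_range_succ, Nat.factorial_succ, pow_succ,
    Nat.cast_mul, Nat.cast_add, Nat.cast_one]
  field_simp
  ring

lemma gru_pascal (α : ℝ) (n : ℕ) :
    gru α (n + 1) = gru (α - 1) (n + 1) - gru (α - 1) n := by
  have h1 : ∏ i ∈ Finset.range (n + 1), (α - (i : ℝ))
      = α * ∏ i ∈ Finset.range n, (α - 1 - (i : ℝ)) := by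
    rw [Finset.prod_range_succ' (fun i => α - (i : ℝ)) n]
    simp only [Nat.cast_zero, sub_zero]
    rw [mul_comm]
    congr 1
    apply Finset.prod_congr rfl
    intro i _
    push_cast
    ring
  have h2 : ∏ i ∈ Finset.range (n + 1), (α - 1 - (i : ℝ))
      = (∏ i ∈ Finset.range n, (α - 1 - (i : ℝ))) * (α - 1 - n) := by
    rw [Finset.prod_range_succ]
  have hk : ((Nat.factorial n : ℝ)) ≠ 0 := by positivity
  have hk1 : ((n : ℝ) + 1) ≠ 0 := by positivity
  simp only [gru, h1, h2, Nat.factorial_succ, pow_succ, Nat.cast_mul, Nat.cast_add, Nat.cast_one]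
  field_simp
  ring


-- sign lemmas
section
variable {α : ℝ}

lemma gru_nonneg (h1 : 1 < α) (h2 : α ≤ 2) : ∀ k, 0 ≤ gru α (k + 2) := by
  intro k
  induction k with
  | zero =>
    rw [gru_two]
    nlinarith
  | succ n ih =>
    rw [gru_succ]
    have h3 : (0:ℝ) ≤ (n : ℝ) + 2 - α := by
      have : (0:ℝ) ≤ (n:ℝ) := Nat.cast_nonneg n
      linarith
    have h4 : (0:ℝ) < (n : ℝ) + 2 + 1 := by positivity
    push_cast
    apply div_nonneg (mul_nonneg ih h3) (le_of_lt h4)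

lemma gru_nonpos_of_le_one {β : ℝ} (h1 : 0 < β) (h2 : β ≤ 1) : ∀ k, gru β (k + 1) ≤ 0 := by
  intro k
  induction k with
  | zero => rw [gru_one]; linarith
  | succ n ih =>
    rw [gru_succ]
    have h3 : (0:ℝ) ≤ (n : ℝ) + 1 - β := by
      have : (0:ℝ) ≤ (n:ℝ) := Nat.cast_nonneg n
      linarith
    have h4 : (0:ℝ) < (n : ℝ) + 1 + 1 := by positivity
    push_cast
    exact div_nonpos_of_nonpos_of_nonneg (mul_nonpos_of_nonpos_of_nonneg ih h3) (le_of_lt h4)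

lemma sum_gru (α : ℝ) (n : ℕ) :
    ∑ k ∈ Finset.range (n + 1), gru α k = gru (α - 1) n := by
  induction n with
  | zero => simp [gru_zero]
  | succ n ih =>
    rw [Finset.sum_range_succ, ih, gru_pascal]
    ring

end


section W
variable {α : ℝ}

/-- partial sums of the weights -/
noncomputable def Wp (α : ℝ) (n : ℕ) : ℝ := ∑ k ∈ Finset.range (n + 1), w10 α k

lemma Wp_succ_eq (α : ℝ) (n : ℕ) :
    Wp α (n + 1) = α / 2 * gru (α - 1) (n + 1) + (2 - α) / 2 * gru (α - 1) n := by
  have : Wp α (n+1) = α / 2 * (∑ k ∈ Finset.range (n + 2), gru α k)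
      + (2 - α) / 2 * (∑ k ∈ Finset.range (n + 1), gru α k) := by
    induction n with
    | zero => simp [Wp, Finset.sum_range_succ, w10]; ring
    | succ n ih =>
      have h : Wp α (n + 1 + 1) = Wp α (n + 1) + w10 α (n + 2) := by
        simp [Wp, Finset.sum_range_succ]
      rw [h, ih]
      show _ = α / 2 * (∑ k ∈ Finset.range (n + 3), gru α k) + _
      rw [Finset.sum_range_succ (n := n + 2), Finset.sum_range_succ (n := n + 1)]
      show _ + w10 α (n + 2) = _
      simp only [w10]
      ring
  rw [this, sum_gru, sum_gru]

lemma Wp_nonpos (h1 : 1 < α) (h2 : α ≤ 2) (n : ℕ) : Wp α (n + 2) ≤ 0 := by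
  rw [Wp_succ_eq]
  have ha : 0 ≤ α / 2 := by linarith
  have hb : 0 ≤ (2 - α) / 2 := by linarith
  have hc := gru_nonpos_of_le_one (by linarith : (0:ℝ) < α - 1) (by linarith) (n + 1)
  have hd := gru_nonpos_of_le_one (by linarith : (0:ℝ) < α - 1) (by linarith) n
  nlinarith

lemma w10_one_neg (h1 : 1 < α) (h2 : α ≤ 2) : w10 α 1 < 0 := by
  have e1 : gru α (0 + 1) = -α := gru_one α
  simp only [w10, gru_zero, e1]
  nlinarith

lemma w10_zero_add_two_pos (h1 : 1 < α) (h2 : α ≤ 2) : 0 < w10 α 0 + w10 α 2 := by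
  have e1 : gru α (1 + 1) = α * (α - 1) / 2 := gru_two α
  simp only [w10, gru_zero, gru_one, e1]
  have h3 : 0 < α * ((α + 2) * (α - 1)) :=
    mul_pos (by linarith) (mul_pos (by linarith) (by linarith))
  nlinarith [h3]

lemma w10_nonneg (h1 : 1 < α) (h2 : α ≤ 2) (k : ℕ) : 0 ≤ w10 α (k + 3) := by
  show 0 ≤ α / 2 * gru α (k + 2 + 1) + (2 - α) / 2 * gru α (k + 2)
  have ha := gru_nonneg h1 h2 (k + 1)
  have hb := gru_nonneg h1 h2 k
  have : gru α (k + 2 + 1) = gru α (k + 1 + 2) := by norm_num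
  rw [this]
  nlinarith

lemma Wp_one (α : ℝ) : Wp α 1 = w10 α 0 + w10 α 1 := by
  simp [Wp, Finset.sum_range_succ]

end W


section Sums
variable (w : ℕ → ℝ) (m : ℕ)

lemma rowSum_general (i : Fin m) (hi : (i : ℕ) + 1 < m) :
    ∑ j : Fin m, wsgdMatrix w m i j = ∑ k ∈ Finset.range ((i : ℕ) + 2), w k := by
  have h1 : ∑ j : Fin m, wsgdMatrix w m i j
      = ∑ j ∈ Finset.range m, (if j ≤ (i : ℕ) + 1 then w ((i : ℕ) + 1 - j) else 0) := by
    rw [← Fin.sum_univ_eq_sum_range (fun j => if j ≤ (i : ℕ) + 1 then w ((i : ℕ) + 1 - j) else 0) m]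
    rfl
  rw [h1]
  have h2 : ∑ j ∈ Finset.range m, (if j ≤ (i : ℕ) + 1 then w ((i : ℕ) + 1 - j) else 0)
      = ∑ j ∈ Finset.range ((i : ℕ) + 2), (if j ≤ (i : ℕ) + 1 then w ((i : ℕ) + 1 - j) else 0) := by
    refine (Finset.sum_subset (Finset.range_subset_range.mpr (by omega)) ?_).symm
    intro j hj hj2
    simp only [Finset.mem_range] at hj hj2
    rw [if_neg (by omega)]
  rw [h2]
  have h3 : ∑ j ∈ Finset.range ((i : ℕ) + 2), (if j ≤ (i : ℕ) + 1 then w ((i : ℕ) + 1 - j) else 0)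
      = ∑ j ∈ Finset.range ((i : ℕ) + 2), w ((i : ℕ) + 1 - j) := by
    apply Finset.sum_congr rfl
    intro j hj
    simp only [Finset.mem_range] at hj
    rw [if_pos (by omega)]
  rw [h3]
  have h4 := Finset.sum_range_reflect w ((i : ℕ) + 2)
  rw [← h4]
  apply Finset.sum_congr rfl
  intro j hj
  simp only [Finset.mem_range] at hj
  congr 1

lemma rowSum_last (hm : 1 ≤ m) (i : Fin m) (hi : (i : ℕ) + 1 = m) :
    ∑ j : Fin m, wsgdMatrix w m i j = ∑ k ∈ Finset.range m, w (k + 1) := by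
  have h1 : ∑ j : Fin m, wsgdMatrix w m i j
      = ∑ j ∈ Finset.range m, (if j ≤ (i : ℕ) + 1 then w ((i : ℕ) + 1 - j) else 0) := by
    rw [← Fin.sum_univ_eq_sum_range (fun j => if j ≤ (i : ℕ) + 1 then w ((i : ℕ) + 1 - j) else 0) m]
    rfl
  rw [h1]
  have h3 : ∑ j ∈ Finset.range m, (if j ≤ (i : ℕ) + 1 then w ((i : ℕ) + 1 - j) else 0)
      = ∑ j ∈ Finset.range m, (fun k => w (k + 1)) (m - 1 - j) := by
    apply Finset.sum_congr rfl
    intro j hj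
    simp only [Finset.mem_range] at hj
    rw [if_pos (by omega)]
    congr 1
    omega
  rw [h3, Finset.sum_range_reflect (fun k => w (k + 1)) m]

lemma colSum_general (i : Fin m) (hi : 1 ≤ (i : ℕ)) :
    ∑ j : Fin m, wsgdMatrix w m j i = ∑ k ∈ Finset.range (m - (i : ℕ) + 1), w k := by
  have h1 : ∑ j : Fin m, wsgdMatrix w m j i
      = ∑ j ∈ Finset.range m, (if (i : ℕ) ≤ j + 1 then w (j + 1 - (i : ℕ)) else 0) := by
    rw [← Fin.sum_univ_eq_sum_range (fun j => if (i : ℕ) ≤ j + 1 then w (j + 1 - (i : ℕ)) else 0) m]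
    rfl
  rw [h1]
  have him : (i : ℕ) < m := i.2
  rw [Finset.range_eq_Ico, ← Finset.sum_Ico_consecutive _ (Nat.zero_le ((i:ℕ) - 1)) (by omega)]
  have hz : ∑ j ∈ Finset.Ico 0 ((i : ℕ) - 1), (if (i : ℕ) ≤ j + 1 then w (j + 1 - (i : ℕ)) else 0) = 0 := by
    apply Finset.sum_eq_zero
    intro j hj
    simp only [Finset.mem_Ico] at hj
    rw [if_neg (by omega)]
  rw [hz, zero_add, Finset.sum_Ico_eq_sum_range]
  have hcount : m - ((i : ℕ) - 1) = m - (i : ℕ) + 1 := by omega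
  rw [hcount]
  apply Finset.sum_congr rfl
  intro k hk
  simp only [Finset.mem_range] at hk
  rw [if_pos (by omega)]
  congr 1
  omega

lemma colSum_zero (i : Fin m) (hi : (i : ℕ) = 0) :
    ∑ j : Fin m, wsgdMatrix w m j i = ∑ k ∈ Finset.range m, w (k + 1) := by
  have h1 : ∑ j : Fin m, wsgdMatrix w m j i
      = ∑ j ∈ Finset.range m, (if (i : ℕ) ≤ j + 1 then w (j + 1 - (i : ℕ)) else 0) := by
    rw [← Fin.sum_univ_eq_sum_range (fun j => if (i : ℕ) ≤ j + 1 then w (j + 1 - (i : ℕ)) else 0) m]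
    rfl
  rw [h1]
  apply Finset.sum_congr rfl
  intro j hj
  rw [if_pos (by omega)]
  congr 1
  omega

end Sums


section Quad
variable {m : ℕ}

lemma double_sum_vanish (G : Fin m → Fin m → ℝ) (h : ∀ i j, G i j + G j i = 0) :
    ∑ i : Fin m, ∑ j : Fin m, G i j = 0 := by
  have hswap : ∑ i : Fin m, ∑ j : Fin m, G i j = ∑ i : Fin m, ∑ j : Fin m, G j i :=
    Finset.sum_comm
  have h2 : (∑ i : Fin m, ∑ j : Fin m, G i j) + (∑ i : Fin m, ∑ j : Fin m, G j i)
      = ∑ i : Fin m, ∑ j : Fin m, (G i j + G j i) := by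
    rw [← Finset.sum_add_distrib]
    apply Finset.sum_congr rfl
    intro i _
    rw [← Finset.sum_add_distrib]
  rw [← hswap] at h2
  simp only [h] at h2
  simp at h2
  linarith

lemma quad_identity (A : Matrix (Fin m) (Fin m) ℝ) (x : Fin m → ℝ) :
    4 * (∑ i : Fin m, ∑ j : Fin m, A i j * x i * x j)
    = 2 * (∑ i : Fin m, (∑ j : Fin m, (A i j + A j i)) * x i ^ 2)
      - ∑ i : Fin m, ∑ j : Fin m, (A i j + A j i) * (x i - x j) ^ 2 := by
  have key := double_sum_vanish
    (fun i j => 4 * (A i j * x i * x j) - 2 * ((A i j + A j i) * x i ^ 2)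
      + (A i j + A j i) * (x i - x j) ^ 2) (by intro i j; ring)
  have e1 : ∑ i : Fin m, ∑ j : Fin m,
      (4 * (A i j * x i * x j) - 2 * ((A i j + A j i) * x i ^ 2)
        + (A i j + A j i) * (x i - x j) ^ 2)
      = 4 * (∑ i : Fin m, ∑ j : Fin m, A i j * x i * x j)
        - 2 * (∑ i : Fin m, (∑ j : Fin m, (A i j + A j i)) * x i ^ 2)
        + ∑ i : Fin m, ∑ j : Fin m, (A i j + A j i) * (x i - x j) ^ 2 := by
    simp only [Finset.sum_add_distrib, Finset.sum_sub_distrib, ← Finset.mul_sum,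
      Finset.sum_mul, add_mul]
  rw [e1] at key
  linarith
end Quad


section Neg
variable {α : ℝ} {m : ℕ}

lemma entry_eq (w : ℕ → ℝ) (m : ℕ) (i j : Fin m) :
    wsgdMatrix w m i j = if (j : ℕ) ≤ (i : ℕ) + 1 then w ((i : ℕ) + 1 - (j : ℕ)) else 0 := rfl

lemma offdiag_nonneg (h1 : 1 < α) (h2 : α ≤ 2) (i j : Fin m) (hij : i ≠ j) :
    0 ≤ wsgdMatrix (w10 α) m i j + wsgdMatrix (w10 α) m j i := by
  have key : ∀ a b : Fin m, (a : ℕ) < (b : ℕ) →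
      0 ≤ wsgdMatrix (w10 α) m a b + wsgdMatrix (w10 α) m b a := by
    intro a b hab
    rw [entry_eq, entry_eq]
    rcases Nat.lt_or_ge ((a : ℕ) + 1) (b : ℕ) with hc | hc
    · -- b ≥ a + 2
      rw [if_neg (by omega), if_pos (by omega)]
      have : (b : ℕ) + 1 - (a : ℕ) = ((b : ℕ) - (a : ℕ) - 2) + 3 := by omega
      rw [this]
      have := w10_nonneg h1 h2 ((b : ℕ) - (a : ℕ) - 2)
      linarith
    · -- b = a + 1
      have hb : (b : ℕ) = (a : ℕ) + 1 := by omega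
      rw [if_pos (by omega), if_pos (by omega)]
      have e1 : (a : ℕ) + 1 - (b : ℕ) = 0 := by omega
      have e2 : (b : ℕ) + 1 - (a : ℕ) = 2 := by omega
      rw [e1, e2]
      exact le_of_lt (w10_zero_add_two_pos h1 h2)
  rcases Nat.lt_trichotomy (i : ℕ) (j : ℕ) with h | h | h
  · exact key i j h
  · exact absurd (Fin.ext h) hij
  · rw [add_comm]; exact key j i h

lemma adj_pos (h1 : 1 < α) (h2 : α ≤ 2) (i j : Fin m) (hij : (j : ℕ) = (i : ℕ) + 1) :
    0 < wsgdMatrix (w10 α) m i j + wsgdMatrix (w10 α) m j i := by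
  rw [entry_eq, entry_eq, if_pos (by omega), if_pos (by omega)]
  have e1 : (i : ℕ) + 1 - (j : ℕ) = 0 := by omega
  have e2 : (j : ℕ) + 1 - (i : ℕ) = 2 := by omega
  rw [e1, e2]
  exact w10_zero_add_two_pos h1 h2

lemma Wp_nonpos' (h1 : 1 < α) (h2 : α ≤ 2) {n : ℕ} (hn : 2 ≤ n) : Wp α n ≤ 0 := by
  obtain ⟨k, rfl⟩ : ∃ k, n = k + 2 := ⟨n - 2, by omega⟩
  exact Wp_nonpos h1 h2 k

lemma shifted_sum (w : ℕ → ℝ) (m : ℕ) :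
    ∑ k ∈ Finset.range m, w (k + 1) = (∑ k ∈ Finset.range (m + 1), w k) - w 0 := by
  rw [Finset.sum_range_succ' w m]
  ring

lemma rowcol_nonpos (h1 : 1 < α) (h2 : α ≤ 2) (hm : 1 ≤ m) (i : Fin m) :
    ∑ j : Fin m, (wsgdMatrix (w10 α) m i j + wsgdMatrix (w10 α) m j i) ≤ 0 := by
  rw [Finset.sum_add_distrib]
  have him : (i : ℕ) < m := i.2
  have hw1 : w10 α 1 < 0 := w10_one_neg h1 h2
  have hWp1 : Wp α 1 = w10 α 0 + w10 α 1 := Wp_one α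
  rcases Nat.lt_or_ge ((i : ℕ) + 1) m with hlt | hge
  · -- not last row
    rw [rowSum_general (w10 α) m i hlt]
    have hrow : ∑ k ∈ Finset.range ((i : ℕ) + 2), w10 α k = Wp α ((i : ℕ) + 1) := rfl
    rw [hrow]
    rcases Nat.eq_zero_or_pos (i : ℕ) with hz | hpos
    · -- first row, m ≥ 2
      rw [colSum_zero (w10 α) m i hz, shifted_sum]
      have : (∑ k ∈ Finset.range (m + 1), w10 α k) = Wp α m := rfl
      rw [this, hz]
      have hWm : Wp α m ≤ 0 := Wp_nonpos' h1 h2 (by omega)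
      rw [hWp1]
      linarith
    · -- interior row
      rw [colSum_general (w10 α) m i hpos]
      have : (∑ k ∈ Finset.range (m - (i : ℕ) + 1), w10 α k) = Wp α (m - (i : ℕ)) := rfl
      rw [this]
      have ha : Wp α ((i : ℕ) + 1) ≤ 0 := Wp_nonpos' h1 h2 (by omega)
      have hb : Wp α (m - (i : ℕ)) ≤ 0 := Wp_nonpos' h1 h2 (by omega)
      linarith
  · -- last row
    have hi : (i : ℕ) + 1 = m := by omega
    rw [rowSum_last (w10 α) m hm i hi, shifted_sum]
    have : (∑ k ∈ Finset.range (m + 1), w10 α k) = Wp α m := rfl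
    rw [this]
    rcases Nat.eq_zero_or_pos (i : ℕ) with hz | hpos
    · -- m = 1
      rw [colSum_zero (w10 α) m i hz, shifted_sum, this]
      have hm1 : m = 1 := by omega
      subst hm1
      have : Wp α 1 = w10 α 0 + w10 α 1 := Wp_one α
      rw [this]
      linarith
    · rw [colSum_general (w10 α) m i hpos]
      have hmi : m - (i : ℕ) = 1 := by omega
      rw [hmi]
      have h01 : (∑ k ∈ Finset.range (1 + 1), w10 α k) = Wp α 1 := rfl
      rw [h01, hWp1]
      have hWm : Wp α m ≤ 0 := Wp_nonpos' h1 h2 (by omega)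
      linarith

lemma rowcol_neg_zero (h1 : 1 < α) (h2 : α ≤ 2) (hm : 1 ≤ m) (i : Fin m) (hz : (i : ℕ) = 0) :
    ∑ j : Fin m, (wsgdMatrix (w10 α) m i j + wsgdMatrix (w10 α) m j i) < 0 := by
  rw [Finset.sum_add_distrib]
  have hw1 : w10 α 1 < 0 := w10_one_neg h1 h2
  have hWp1 : Wp α 1 = w10 α 0 + w10 α 1 := Wp_one α
  rcases Nat.lt_or_ge ((i : ℕ) + 1) m with hlt | hge
  · rw [rowSum_general (w10 α) m i hlt]
    have hrow : ∑ k ∈ Finset.range ((i : ℕ) + 2), w10 α k = Wp α ((i : ℕ) + 1) := rfl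
    rw [hrow, colSum_zero (w10 α) m i hz, shifted_sum]
    have : (∑ k ∈ Finset.range (m + 1), w10 α k) = Wp α m := rfl
    rw [this, hz]
    have hWm : Wp α m ≤ 0 := Wp_nonpos' h1 h2 (by omega)
    rw [hWp1]
    linarith
  · have hi : (i : ℕ) + 1 = m := by omega
    rw [rowSum_last (w10 α) m hm i hi, shifted_sum, colSum_zero (w10 α) m i hz, shifted_sum]
    have : (∑ k ∈ Finset.range (m + 1), w10 α k) = Wp α m := rfl
    rw [this]
    have hm1 : m = 1 := by omega
    subst hm1
    have hW : Wp α 1 = w10 α 0 + w10 α 1 := Wp_one α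
    rw [hW]
    linarith

end Neg


section QF
variable {α : ℝ} {m : ℕ}

lemma Q_eq (A : Matrix (Fin m) (Fin m) ℝ) (x : Fin m → ℝ) :
    x ⬝ᵥ A.mulVec x = ∑ i : Fin m, ∑ j : Fin m, A i j * x i * x j := by
  simp only [dotProduct, Matrix.mulVec, Finset.mul_sum]
  apply Finset.sum_congr rfl
  intro i _
  apply Finset.sum_congr rfl
  intro j _
  ring

lemma T_nonpos (h1 : 1 < α) (h2 : α ≤ 2) (hm : 1 ≤ m) (x : Fin m → ℝ) :
    ∑ i : Fin m, (∑ j : Fin m, (wsgdMatrix (w10 α) m i j + wsgdMatrix (w10 α) m j i)) * x i ^ 2 ≤ 0 :=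
  Finset.sum_nonpos fun i _ =>
    mul_nonpos_of_nonpos_of_nonneg (rowcol_nonpos h1 h2 hm i) (sq_nonneg _)

lemma U_nonneg (h1 : 1 < α) (h2 : α ≤ 2) (x : Fin m → ℝ) :
    0 ≤ ∑ i : Fin m, ∑ j : Fin m,
      (wsgdMatrix (w10 α) m i j + wsgdMatrix (w10 α) m j i) * (x i - x j) ^ 2 := by
  apply Finset.sum_nonneg
  intro i _
  apply Finset.sum_nonneg
  intro j _
  rcases eq_or_ne i j with rfl | hij
  · simp
  · exact mul_nonneg (offdiag_nonneg h1 h2 i j hij) (sq_nonneg _)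

lemma Q_nonpos (h1 : 1 < α) (h2 : α ≤ 2) (hm : 1 ≤ m) (x : Fin m → ℝ) :
    x ⬝ᵥ (wsgdMatrix (w10 α) m).mulVec x ≤ 0 := by
  rw [Q_eq]
  have hq := quad_identity (wsgdMatrix (w10 α) m) x
  have hT := T_nonpos h1 h2 hm x
  have hU := U_nonneg h1 h2 x
  linarith

lemma Q_neg (h1 : 1 < α) (h2 : α ≤ 2) (hm : 1 ≤ m) (x : Fin m → ℝ) (hx : x ≠ 0) :
    x ⬝ᵥ (wsgdMatrix (w10 α) m).mulVec x < 0 := by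
  set A := wsgdMatrix (w10 α) m with hA
  rcases lt_or_eq_of_le (Q_nonpos h1 h2 hm x) with h | h
  · exact h
  -- Q = 0 : derive x = 0, contradiction
  exfalso
  rw [Q_eq] at h
  rw [← hA] at h
  have hq := quad_identity A x
  rw [h] at hq
  have hT := T_nonpos h1 h2 hm x
  have hU := U_nonneg h1 h2 x
  have hTzero : ∑ i : Fin m, (∑ j : Fin m, (A i j + A j i)) * x i ^ 2 = 0 := by linarith
  have hUzero : ∑ i : Fin m, ∑ j : Fin m, (A i j + A j i) * (x i - x j) ^ 2 = 0 := by linarith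
  -- x at index 0 vanishes
  have hx0 : ∀ hn : 0 < m, x ⟨0, hn⟩ = 0 := by
    intro hn
    have hmem := (Finset.sum_eq_zero_iff_of_nonpos (fun i _ =>
      mul_nonpos_of_nonpos_of_nonneg (rowcol_nonpos h1 h2 hm i) (sq_nonneg _))).mp hTzero
      ⟨0, hn⟩ (Finset.mem_univ _)
    have hneg := rowcol_neg_zero h1 h2 hm ⟨0, hn⟩ rfl
    rcases mul_eq_zero.mp hmem with h' | h'
    · exact absurd h' (ne_of_lt hneg)
    · exact pow_eq_zero_iff (by norm_num) |>.mp h'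
  -- each off-diagonal term of U vanishes
  have hUterm : ∀ i j : Fin m, (A i j + A j i) * (x i - x j) ^ 2 = 0 := by
    have houter := (Finset.sum_eq_zero_iff_of_nonneg (fun i _ => Finset.sum_nonneg fun j _ => by
      rcases eq_or_ne i j with rfl | hij
      · simp
      · exact mul_nonneg (offdiag_nonneg h1 h2 i j hij) (sq_nonneg _))).mp hUzero
    intro i j
    have hinner := (Finset.sum_eq_zero_iff_of_nonneg (fun j _ => by
      rcases eq_or_ne i j with rfl | hij
      · simp
      · exact mul_nonneg (offdiag_nonneg h1 h2 i j hij) (sq_nonneg _))).mp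
      (houter i (Finset.mem_univ _)) j (Finset.mem_univ _)
    exact hinner
  have hzero : ∀ n, ∀ hn : n < m, x ⟨n, hn⟩ = 0 := by
    intro n
    induction n with
    | zero => exact hx0
    | succ k ih =>
      intro hn
      have hk : k < m := by omega
      have hterm := hUterm ⟨k, hk⟩ ⟨k + 1, hn⟩
      have hS := adj_pos h1 h2 ⟨k, hk⟩ ⟨k + 1, hn⟩ rfl
      have hsq : (x ⟨k, hk⟩ - x ⟨k + 1, hn⟩) ^ 2 = 0 := by
        rcases mul_eq_zero.mp hterm with h' | h'
        · exact absurd h' (ne_of_gt hS)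
        · exact h'
      have hdiff : x ⟨k, hk⟩ - x ⟨k + 1, hn⟩ = 0 := by
        exact pow_eq_zero_iff (by norm_num) |>.mp hsq
      have := ih hk
      linarith
  apply hx
  funext i
  have := hzero i i.2
  simpa using this

end QF


section Skew
variable {m : ℕ}

lemma gru_one_eq_zero (k : ℕ) : gru 1 (k + 2) = 0 := by
  unfold gru
  rw [Finset.prod_eq_zero (i := 1) (by simp [Finset.mem_range]) (by norm_num)]
  simp

lemma w10_one_vals : w10 1 0 = 1/2 ∧ w10 1 1 = 0 ∧ w10 1 2 = -(1/2) ∧ ∀ k, w10 1 (k + 3) = 0 := by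
  refine ⟨?_, ?_, ?_, ?_⟩
  · simp [w10, gru_zero]
  · show (1:ℝ)/2 * gru 1 (0+1) + (2-1)/2 * gru 1 0 = 0
    rw [show (0+1) = 1 from rfl, gru_one, gru_zero]; norm_num
  · show (1:ℝ)/2 * gru 1 (1+1) + (2-1)/2 * gru 1 1 = -(1/2)
    rw [show (1+1) = 2 from rfl, show gru 1 2 = 0 from gru_one_eq_zero 0, gru_one]; norm_num
  · intro k
    show (1:ℝ)/2 * gru 1 (k+2+1) + (2-1)/2 * gru 1 (k+2) = 0
    rw [show k+2+1 = (k+1)+2 by omega, gru_one_eq_zero, gru_one_eq_zero]; norm_num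

lemma wsgd_skew (i j : Fin m) : wsgdMatrix (w10 1) m j i = - wsgdMatrix (w10 1) m i j := by
  obtain ⟨w0, w1, w2, wk⟩ := w10_one_vals
  rw [entry_eq, entry_eq]
  rcases Nat.lt_trichotomy (i : ℕ) (j : ℕ) with h | h | h
  · rcases Nat.lt_or_ge ((i : ℕ) + 1) (j : ℕ) with hc | hc
    · rw [if_pos (by omega), if_neg (by omega)]
      rw [show (j : ℕ) + 1 - (i : ℕ) = ((j:ℕ) - (i:ℕ) - 2) + 3 by omega, wk]
      norm_num
    · rw [if_pos (by omega), if_pos (by omega)]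
      rw [show (j : ℕ) + 1 - (i : ℕ) = 2 by omega, show (i : ℕ) + 1 - (j : ℕ) = 0 by omega,
        w0, w2]
  · rw [if_pos (by omega), if_pos (by omega)]
    rw [show (i : ℕ) + 1 - (j : ℕ) = 1 by omega, show (j : ℕ) + 1 - (i : ℕ) = 1 by omega, w1]
    norm_num
  · rcases Nat.lt_or_ge ((j : ℕ) + 1) (i : ℕ) with hc | hc
    · rw [if_neg (by omega), if_pos (by omega)]
      rw [show (i : ℕ) + 1 - (j : ℕ) = ((i:ℕ) - (j:ℕ) - 2) + 3 by omega, wk]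
      norm_num
    · rw [if_pos (by omega), if_pos (by omega)]
      rw [show (j : ℕ) + 1 - (i : ℕ) = 0 by omega, show (i : ℕ) + 1 - (j : ℕ) = 2 by omega,
        w0, w2]
      norm_num

lemma Q_skew_zero (x : Fin m → ℝ) : x ⬝ᵥ (wsgdMatrix (w10 1) m).mulVec x = 0 := by
  rw [Q_eq]
  apply double_sum_vanish
  intro i j
  rw [wsgd_skew i j]
  ring

end Skew


section Bridge
variable {m : ℕ}

open Complex in
lemma re_eig (M : Matrix (Fin m) (Fin m) ℝ) (lam : ℂ) (v : Fin m → ℂ) (hv : v ≠ 0)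
    (h : (M.map Complex.ofReal).mulVec v = lam • v) :
    ∃ N : ℝ, 0 < N ∧ lam.re * N =
      ((fun i => (v i).re) ⬝ᵥ M.mulVec (fun i => (v i).re))
      + ((fun i => (v i).im) ⬝ᵥ M.mulVec (fun i => (v i).im)) := by
  refine ⟨∑ i : Fin m, Complex.normSq (v i), ?_, ?_⟩
  · obtain ⟨i, hi⟩ := Function.ne_iff.mp hv
    exact Finset.sum_pos' (fun j _ => Complex.normSq_nonneg _)
      ⟨i, Finset.mem_univ _, Complex.normSq_pos.mpr hi⟩
  · have hZ1 : ∑ i : Fin m, (starRingEnd ℂ) (v i) * ((M.map Complex.ofReal).mulVec v i)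
        = lam * ((∑ i : Fin m, Complex.normSq (v i) : ℝ) : ℂ) := by
      rw [h]
      push_cast
      rw [Finset.mul_sum]
      apply Finset.sum_congr rfl
      intro i _
      simp only [Pi.smul_apply, smul_eq_mul]
      rw [show (starRingEnd ℂ) (v i) * (lam * v i) = lam * (v i * (starRingEnd ℂ) (v i)) by ring,
        Complex.mul_conj]
    have hZ2 : (∑ i : Fin m, (starRingEnd ℂ) (v i) * ((M.map Complex.ofReal).mulVec v i)).re
        = ∑ i : Fin m, ∑ j : Fin m,
            M i j * ((v i).re * (v j).re + (v i).im * (v j).im) := by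
      rw [Complex.re_sum]
      apply Finset.sum_congr rfl
      intro i _
      simp only [Matrix.mulVec, dotProduct, Matrix.map_apply, Finset.mul_sum, Complex.re_sum]
      apply Finset.sum_congr rfl
      intro j _
      simp [Complex.mul_re, Complex.mul_im]
      ring
    rw [hZ1] at hZ2
    have hre : (lam * ((∑ i : Fin m, Complex.normSq (v i) : ℝ) : ℂ)).re
        = lam.re * ∑ i : Fin m, Complex.normSq (v i) := by
      simp [Complex.mul_re]
    rw [hre] at hZ2
    rw [hZ2, Q_eq, Q_eq, ← Finset.sum_add_distrib]
    apply Finset.sum_congr rfl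
    intro i _
    rw [← Finset.sum_add_distrib]
    apply Finset.sum_congr rfl
    intro j _
    ring

end Bridge


theorem wsgd10_matrix_eigenvalues (α : ℝ) (m : ℕ) (hm : 1 ≤ m) :
    (α = 1 → ∀ lam : ℂ,
      (∃ v : Fin m → ℂ, v ≠ 0 ∧
        ((wsgdMatrix (w10 α) m).map Complex.ofReal).mulVec v = lam • v) → lam.re = 0) ∧
    (1 < α → α ≤ 2 →
      (∀ lam : ℂ,
        (∃ v : Fin m → ℂ, v ≠ 0 ∧
          ((wsgdMatrix (w10 α) m).map Complex.ofReal).mulVec v = lam • v) → lam.re < 0) ∧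
      (∀ x : Fin m → ℝ, x ≠ 0 → x ⬝ᵥ (wsgdMatrix (w10 α) m).mulVec x < 0)) := by
  constructor
  · rintro hα lam ⟨v, hv, heig⟩
    subst hα
    obtain ⟨N, hN, hkey⟩ := re_eig (wsgdMatrix (w10 1) m) lam v hv heig
    rw [Q_skew_zero, Q_skew_zero] at hkey
    rcases mul_eq_zero.mp (by linarith : lam.re * N = 0) with h | h
    · exact h
    · exact absurd h (ne_of_gt hN)
  · intro h1 h2
    refine ⟨?_, fun x hx => Q_neg h1 h2 hm x hx⟩
    rintro lam ⟨v, hv, heig⟩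
    obtain ⟨N, hN, hkey⟩ := re_eig (wsgdMatrix (w10 α) m) lam v hv heig
    set a : Fin m → ℝ := fun i => (v i).re with ha
    set b : Fin m → ℝ := fun i => (v i).im with hb
    have hQa : a ⬝ᵥ (wsgdMatrix (w10 α) m).mulVec a ≤ 0 := Q_nonpos h1 h2 hm a
    have hQb : b ⬝ᵥ (wsgdMatrix (w10 α) m).mulVec b ≤ 0 := Q_nonpos h1 h2 hm b
    have hab : a ≠ 0 ∨ b ≠ 0 := by
      by_contra hc
      push_neg at hc
      apply hv
      funext i
      have h1' : (v i).re = 0 := congrFun hc.1 i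
      have h2' : (v i).im = 0 := congrFun hc.2 i
      exact Complex.ext h1' h2'
    have hsum : a ⬝ᵥ (wsgdMatrix (w10 α) m).mulVec a
        + b ⬝ᵥ (wsgdMatrix (w10 α) m).mulVec b < 0 := by
      rcases hab with h | h
      · have := Q_neg h1 h2 hm a h; linarith
      · have := Q_neg h1 h2 hm b h; linarith
    nlinarith [hkey, hsum, hN]
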